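/- arXiv:0903.1256 — 3 statements merged into one kernel-verified Lean document; each statement's English description precedes it below -/
import Mathlib

section
/- Let V be a nonzero finite-dimensional real vector space, B a symmetric bilinear form on V of signature (1, dim V − 1), and C ⊆ V a closed salient convex cone that spans V and satisfies B(x, y) ≥ 0 for all x, y ∈ C. Let q > 0 and let T : V → V be a linear automorphism with T(C) = C and B(T x, T y) = q² · B(x, y) for all x, y ∈ V. If there exists a nonzero M ∈ C with T M = q · M, then every complex eigenvalue of T has modulus q. (This is the linear-algebra content of Lemma 2.4 of the paper, with V the space of Weil divisor classes of a normal projective surface, B the Mumford intersection form, C the nef cone, and T the pullback by an endomorphism of degree q².) -/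
/-- A convex cone: closed under addition and multiplication by positive real scalars. -/
def IsConvexCone {V : Type*} [AddCommGroup V] [Module ℝ V] (C : Set V) : Prop :=
  (∀ x ∈ C, ∀ y ∈ C, x + y ∈ C) ∧ ∀ (t : ℝ), 0 < t → ∀ x ∈ C, t • x ∈ C

/-- Salient: `C ∩ (−C) ⊆ {0}`. -/
def IsSalient {V : Type*} [AddCommGroup V] [Module ℝ V] (C : Set V) : Prop :=
  ∀ x ∈ C, -x ∈ C → x = 0

/-- A bilinear form has signature `(1, dim V − 1)`: there is an orthogonal basis with
exactly one basis vector of positive self-pairing, all others negative. -/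
def HasSignatureOneRest {V : Type*} [AddCommGroup V] [Module ℝ V]
    (B : V →ₗ[ℝ] V →ₗ[ℝ] ℝ) : Prop :=
  ∃ (n : ℕ) (b : Module.Basis (Fin n) ℝ V) (i₀ : Fin n),
    (∀ i j, i ≠ j → B (b i) (b j) = 0) ∧
    0 < B (b i₀) (b i₀) ∧ ∀ i, i ≠ i₀ → B (b i) (b i) < 0

open Finset in
private lemma aux_zero' {n : ℕ} {i₀ : Fin n} {d : Fin n → ℝ} (hdn : ∀ i, i ≠ i₀ → d i < 0)
    (z : Fin n → ℝ) (hz0 : z i₀ = 0) (hzz : 0 ≤ ∑ i, d i * (z i * z i)) : z = 0 := by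
  have hterm : ∀ i ∈ Finset.univ (α := Fin n), d i * (z i * z i) ≤ 0 := by
    intro i _
    by_cases h : i = i₀
    · subst h; simp [hz0]
    · exact mul_nonpos_of_nonpos_of_nonneg (le_of_lt (hdn i h)) (mul_self_nonneg _)
  have hsum : ∑ i, d i * (z i * z i) = 0 :=
    le_antisymm (Finset.sum_nonpos hterm) hzz
  have hall : ∀ i ∈ Finset.univ (α := Fin n), d i * (z i * z i) = 0 :=
    (Finset.sum_eq_zero_iff_of_nonpos hterm).mp hsum
  funext i
  by_cases h : i = i₀
  · subst h; exact hz0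
  · have h1 := hall i (Finset.mem_univ i)
    have hd := hdn i h
    have h2 : z i * z i = 0 := by
      rcases mul_eq_zero.mp h1 with h1 | h1
      · exact absurd h1 (ne_of_lt hd)
      · exact h1
    simpa using mul_self_eq_zero.mp h2

open Finset in
private lemma aux_span' {n : ℕ} {i₀ : Fin n} {d : Fin n → ℝ}
    (hdn : ∀ i, i ≠ i₀ → d i < 0) (m x : Fin n → ℝ) (hm : m ≠ 0)
    (hmm : 0 ≤ ∑ i, d i * (m i * m i)) (hxx : ∑ i, d i * (x i * x i) = 0)
    (hmx : ∑ i, d i * (m i * x i) = 0) : ∃ c : ℝ, x = c • m := by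
  have hmi₀ : m i₀ ≠ 0 := fun h0 => hm (aux_zero' hdn m h0 hmm)
  set c : ℝ := x i₀ / m i₀ with hc
  set z : Fin n → ℝ := fun i => x i - c * m i with hz
  have hz0 : z i₀ = 0 := by
    show x i₀ - x i₀ / m i₀ * m i₀ = 0; rw [div_mul_cancel₀ _ hmi₀, sub_self]
  have hQz : ∑ i, d i * (z i * z i)
      = (∑ i, d i * (x i * x i)) - 2 * c * (∑ i, d i * (m i * x i))
        + c ^ 2 * (∑ i, d i * (m i * m i)) := by
    rw [Finset.mul_sum, Finset.mul_sum, ← Finset.sum_sub_distrib, ← Finset.sum_add_distrib]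
    exact Finset.sum_congr rfl fun i _ => by simp only [hz]; ring
  have hQz' : 0 ≤ ∑ i, d i * (z i * z i) := by
    rw [hQz, hxx, hmx]
    have : 0 ≤ c ^ 2 * (∑ i, d i * (m i * m i)) := mul_nonneg (sq_nonneg c) hmm
    linarith
  have hzz : z = 0 := aux_zero' hdn z hz0 hQz'
  refine ⟨c, funext fun i => ?_⟩
  have h3 := congrFun hzz i
  simp only [hz, Pi.zero_apply] at h3
  simp only [Pi.smul_apply, smul_eq_mul]
  linarith

open Finset in
private lemma aux_quad' {n : ℕ} (A : Matrix (Fin n) (Fin n) ℂ) (d : Fin n → ℂ) (u w : Fin n → ℂ) :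
    ∑ i, d i * ((A.mulVec u) i * (A.mulVec w) i)
      = ∑ j, ∑ k, (∑ i, d i * (A i j * A i k)) * (u j * w k) := by
  have step1 : ∑ i, d i * ((A.mulVec u) i * (A.mulVec w) i)
      = ∑ i, ∑ j, ∑ k, d i * (A i j * A i k) * (u j * w k) := by
    refine Finset.sum_congr rfl fun i _ => ?_
    simp only [Matrix.mulVec, dotProduct]
    rw [Finset.sum_mul_sum, Finset.mul_sum]
    refine Finset.sum_congr rfl fun j _ => ?_
    rw [Finset.mul_sum]
    exact Finset.sum_congr rfl fun k _ => by ring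
  rw [step1, Finset.sum_comm]
  refine Finset.sum_congr rfl fun j _ => ?_
  rw [Finset.sum_comm]
  refine Finset.sum_congr rfl fun k _ => ?_
  rw [Finset.sum_mul]

set_option maxHeartbeats 1000000 in
open Finset Polynomial in
private lemma aux_main {V : Type*} [AddCommGroup V] [Module ℝ V] [FiniteDimensional ℝ V]
    (B : V →ₗ[ℝ] V →ₗ[ℝ] ℝ)
    (n : ℕ) (b : Module.Basis (Fin n) ℝ V) (i₀ : Fin n)
    (horth : ∀ i j, i ≠ j → B (b i) (b j) = 0)
    (hpos : 0 < B (b i₀) (b i₀)) (hneg : ∀ i, i ≠ i₀ → B (b i) (b i) < 0)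
    (q : ℝ) (hq : 0 < q)
    (T : V ≃ₗ[ℝ] V)
    (hTB : ∀ x y, B (T x) (T y) = q ^ 2 * B x y)
    (M : V) (hM0 : M ≠ 0) (hTM : T M = q • M) (hBMM0 : 0 ≤ B M M) :
    ∀ μ : ℂ, (Polynomial.aeval μ) (LinearMap.charpoly (T : V →ₗ[ℝ] V)) = 0 →
      ‖μ‖ = q := by
  intro μ hμ
  by_contra hne
  set f : V →ₗ[ℝ] V := (T : V →ₗ[ℝ] V) with hf
  set d : Fin n → ℝ := fun i => B (b i) (b i) with hd
  set A : Matrix (Fin n) (Fin n) ℝ := LinearMap.toMatrix b b f with hA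
  set Ac : Matrix (Fin n) (Fin n) ℂ := A.map (algebraMap ℝ ℂ) with hAc
  have hAcd : ∀ i j, Ac i j = ((A i j : ℝ) : ℂ) := fun i j => rfl
  -- μ is a root of Ac.charpoly, get an eigenvector
  have h1 : Polynomial.eval μ Ac.charpoly = 0 := by
    have e : Ac.charpoly = f.charpoly.map (algebraMap ℝ ℂ) := by
      rw [hAc, Matrix.charpoly_map, LinearMap.charpoly_toMatrix]
    rw [e, Polynomial.eval_map, ← Polynomial.aeval_def]
    exact hμ
  obtain ⟨v, hv0, hv⟩ : ∃ v : Fin n → ℂ, v ≠ 0 ∧ Ac.mulVec v = μ • v := by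
    have hdet : (Matrix.scalar (Fin n) μ - Ac).det = 0 := by
      rw [← h1, Matrix.charpoly, eval_det, Matrix.matPolyEquiv_charmatrix]
      simp
    obtain ⟨w, hw0, hw⟩ := (Matrix.exists_mulVec_eq_zero_iff).mpr hdet
    refine ⟨w, hw0, ?_⟩
    rw [Matrix.sub_mulVec] at hw
    have hs : (Matrix.scalar (Fin n) μ).mulVec w = μ • w := by
      funext i
      simp [Matrix.scalar_apply, Matrix.mulVec_diagonal]
    rw [hs] at hw
    exact (eq_of_sub_eq_zero hw).symm
  -- the matrix identity
  have hG : ∀ j k, ∑ i, d i * (A i j * A i k) = q ^ 2 * B (b j) (b k) := by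
    intro j k
    have hexp : ∀ j : Fin n, f (b j) = ∑ i, A i j • b i := by
      intro j
      conv_lhs => rw [← Module.Basis.sum_repr b (f (b j))]
      exact Finset.sum_congr rfl fun i _ => by rw [hA, LinearMap.toMatrix_apply]
    have h2 := hTB (b j) (b k)
    rw [show (T (b j) : V) = f (b j) from rfl, show (T (b k) : V) = f (b k) from rfl,
      hexp j, hexp k] at h2
    rw [map_sum] at h2
    simp only [LinearMap.coe_sum, Finset.sum_apply, map_smul, LinearMap.smul_apply,
      map_sum, smul_eq_mul, Finset.mul_sum] at h2
    rw [← h2]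
    refine Finset.sum_congr rfl fun i _ => ?_
    rw [Finset.sum_eq_single i]
    · simp only [hd]; ring
    · intro i' _ hi'
      rw [horth i' i hi']; ring
    · intro h; exact absurd (Finset.mem_univ i) h
  -- the complex quadratic form
  set Q : (Fin n → ℂ) → (Fin n → ℂ) → ℂ := fun u w => ∑ i, (d i : ℂ) * (u i * w i) with hQ
  have hco : ∀ j k, (∑ i, (d i : ℂ) * (Ac i j * Ac i k)) = ((q ^ 2 * B (b j) (b k) : ℝ) : ℂ) := by
    intro j k
    rw [← hG j k]
    push_cast
    rfl
  have hQA : ∀ u w : Fin n → ℂ, Q (Ac.mulVec u) (Ac.mulVec w) = (q : ℂ) ^ 2 * Q u w := by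
    intro u w
    show (∑ i, (d i : ℂ) * ((Ac.mulVec u) i * (Ac.mulVec w) i)) = _
    rw [aux_quad']
    have step : ∑ j, ∑ k, (∑ i, (d i : ℂ) * (Ac i j * Ac i k)) * (u j * w k)
        = ∑ j, (q : ℂ) ^ 2 * ((d j : ℂ) * (u j * w j)) := by
      refine Finset.sum_congr rfl fun j _ => ?_
      rw [Finset.sum_eq_single j]
      · rw [hco j j]; push_cast; ring
      · intro k _ hk
        rw [hco j k, horth j k (Ne.symm hk)]
        simp
      · intro h; exact absurd (Finset.mem_univ j) h
    rw [step, ← Finset.mul_sum]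
  have hQs : ∀ (a c : ℂ) (u w : Fin n → ℂ), Q (a • u) (c • w) = a * c * Q u w := by
    intro a c u w
    show (∑ i, _) = _
    rw [Finset.mul_sum]
    exact Finset.sum_congr rfl fun i _ => by
      simp only [Pi.smul_apply, smul_eq_mul]; ring
  -- conjugate eigenvector
  set vb : Fin n → ℂ := fun i => (starRingEnd ℂ) (v i) with hvb
  have hvbe : Ac.mulVec vb = ((starRingEnd ℂ) μ) • vb := by
    funext j
    have := congrFun hv j
    have hc := congrArg (starRingEnd ℂ) this
    simp only [Matrix.mulVec, dotProduct, map_sum, map_mul, Pi.smul_apply,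
      smul_eq_mul] at hc ⊢
    simp only [hAcd, Complex.conj_ofReal] at hc
    simpa [hvb, hAcd] using hc
  -- scalar inequalities
  have hqC : (q : ℂ) ≠ 0 := by exact_mod_cast ne_of_gt hq
  have hμq : μ ≠ (q : ℂ) := by
    intro h; apply hne; rw [h, Complex.norm_real, Real.norm_eq_abs, abs_of_pos hq]
  have habs : ‖μ‖ ≠ q := hne
  have hμμ : μ * (starRingEnd ℂ) μ ≠ (q : ℂ) * (q : ℂ) := by
    rw [Complex.mul_conj]
    intro h
    have : Complex.normSq μ = q * q := by exact_mod_cast h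
    apply habs
    have h2 : ‖μ‖ ^ 2 = q ^ 2 := by
      rw [← Complex.normSq_eq_norm_sq, this]; ring
    nlinarith [norm_nonneg μ, hq]
  have hμ2 : μ * μ ≠ (q : ℂ) * (q : ℂ) := by
    intro h
    apply habs
    have h2 := congrArg (‖·‖) h
    simp only [norm_mul, Complex.norm_real, Real.norm_eq_abs, abs_of_pos hq] at h2
    nlinarith [norm_nonneg μ, hq]
  -- eigen relations for Q
  have hQvv : Q v v = 0 := by
    have h2 := hQA v v
    rw [hv, hQs] at h2
    have h3 : (μ * μ - (q : ℂ) * (q : ℂ)) * Q v v = 0 := by linear_combination h2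
    rcases mul_eq_zero.mp h3 with h4 | h4
    · exact absurd (sub_eq_zero.mp h4) hμ2
    · exact h4
  have hQvvb : Q v vb = 0 := by
    have h2 := hQA v vb
    rw [hv, hvbe, hQs] at h2
    have h3 : (μ * (starRingEnd ℂ) μ - (q : ℂ) * (q : ℂ)) * Q v vb = 0 := by
      linear_combination h2
    rcases mul_eq_zero.mp h3 with h4 | h4
    · exact absurd (sub_eq_zero.mp h4) hμμ
    · exact h4
  -- the fixed vector M in coordinates
  set m : Fin n → ℝ := ⇑(b.repr M) with hm
  set mc : Fin n → ℂ := fun i => (m i : ℂ) with hmc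
  have hm0 : m ≠ 0 := by
    intro h
    apply hM0
    have : b.repr M = 0 := DFunLike.coe_injective h
    simpa using congrArg b.repr.symm this
  have hAm : A.mulVec m = q • m := by
    have h2 := LinearMap.toMatrix_mulVec_repr b b f M
    rw [show f M = q • M from hTM, map_smul] at h2
    rw [hA, hm, h2]
    exact Finsupp.coe_smul q (b.repr M)
  have hAcm : Ac.mulVec mc = (q : ℂ) • mc := by
    funext j
    have h2 := congrFun hAm j
    simp only [Matrix.mulVec, dotProduct, Pi.smul_apply, smul_eq_mul] at h2 ⊢
    simp only [hAcd, hmc]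
    exact_mod_cast h2
  have hBMM : B M M = ∑ i, d i * (m i * m i) := by
    conv_lhs => rw [← Module.Basis.sum_repr b M]
    rw [map_sum]
    simp only [LinearMap.coe_sum, Finset.sum_apply, map_smul, LinearMap.smul_apply,
      map_sum, smul_eq_mul, Finset.mul_sum]
    refine Finset.sum_congr rfl fun i _ => ?_
    rw [Finset.sum_eq_single i]
    · simp only [hd, hm]; ring
    · intro i' _ hi'
      rw [horth i' i hi']; ring
    · intro h; exact absurd (Finset.mem_univ i) h
  have hmm0 : 0 ≤ ∑ i, d i * (m i * m i) := hBMM ▸ hBMM0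
  -- Q mc v = 0
  have hQmv : Q mc v = 0 := by
    have h2 := hQA mc v
    rw [hAcm, hv, hQs] at h2
    have h3 : (q : ℂ) * (μ - (q : ℂ)) * Q mc v = 0 := by linear_combination h2
    rcases mul_eq_zero.mp h3 with h4 | h4
    · rcases mul_eq_zero.mp h4 with h5 | h5
      · exact absurd h5 hqC
      · exact absurd (sub_eq_zero.mp h5) hμq
    · exact h4
  -- real and imaginary parts
  set x : Fin n → ℝ := fun i => (v i).re with hx
  set y : Fin n → ℝ := fun i => (v i).im with hy
  have e1 : ∀ i, ((d i : ℂ) * (v i * vb i)).re = d i * (x i * x i) + d i * (y i * y i) := by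
    intro i
    simp only [hvb, hx, hy, Complex.mul_re, Complex.mul_im, Complex.conj_re, Complex.conj_im,
      Complex.ofReal_re, Complex.ofReal_im]
    ring
  have e2 : ∀ i, ((d i : ℂ) * (v i * v i)).re = d i * (x i * x i) - d i * (y i * y i) := by
    intro i
    simp only [hx, hy, Complex.mul_re, Complex.mul_im, Complex.ofReal_re, Complex.ofReal_im]
    ring
  have e3 : ∀ i, ((d i : ℂ) * (mc i * v i)).re = d i * (m i * x i) := by
    intro i
    simp only [hmc, hx, Complex.mul_re, Complex.mul_im, Complex.ofReal_re, Complex.ofReal_im]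
    ring
  have e4 : ∀ i, ((d i : ℂ) * (mc i * v i)).im = d i * (m i * y i) := by
    intro i
    simp only [hmc, hy, Complex.mul_re, Complex.mul_im, Complex.ofReal_re, Complex.ofReal_im]
    ring
  have hPN : (∑ i, d i * (x i * x i)) + (∑ i, d i * (y i * y i)) = 0 := by
    have h2 := congrArg Complex.re hQvvb
    rw [show (Q v vb).re = ∑ i, ((d i : ℂ) * (v i * vb i)).re from Complex.re_sum _ _] at h2
    rw [← Finset.sum_add_distrib, ← Finset.sum_congr rfl fun i _ => e1 i]
    simpa using h2
  have hPmN : (∑ i, d i * (x i * x i)) - (∑ i, d i * (y i * y i)) = 0 := by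
    have h2 := congrArg Complex.re hQvv
    rw [show (Q v v).re = ∑ i, ((d i : ℂ) * (v i * v i)).re from Complex.re_sum _ _] at h2
    rw [← Finset.sum_sub_distrib, ← Finset.sum_congr rfl fun i _ => e2 i]
    simpa using h2
  have hxx : ∑ i, d i * (x i * x i) = 0 := by linarith
  have hyy : ∑ i, d i * (y i * y i) = 0 := by linarith
  have hmx : ∑ i, d i * (m i * x i) = 0 := by
    have h2 := congrArg Complex.re hQmv
    rw [show (Q mc v).re = ∑ i, ((d i : ℂ) * (mc i * v i)).re from Complex.re_sum _ _] at h2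
    rw [← Finset.sum_congr rfl fun i _ => e3 i]
    simpa using h2
  have hmy : ∑ i, d i * (m i * y i) = 0 := by
    have h2 := congrArg Complex.im hQmv
    rw [show (Q mc v).im = ∑ i, ((d i : ℂ) * (mc i * v i)).im from Complex.im_sum _ _] at h2
    rw [← Finset.sum_congr rfl fun i _ => e4 i]
    simpa using h2
  -- x and y are multiples of m
  have hneg' : ∀ i, i ≠ i₀ → d i < 0 := fun i h => hneg i h
  obtain ⟨a, ha⟩ := aux_span' hneg' m x hm0 hmm0 hxx hmx
  obtain ⟨c, hc⟩ := aux_span' hneg' m y hm0 hmm0 hyy hmy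
  -- conclude μ = q, contradiction
  set s : ℂ := (a : ℂ) + (c : ℂ) * Complex.I with hs
  have hvs : v = s • mc := by
    funext i
    have hxi : (v i).re = a * m i := by
      have := congrFun ha i; simpa [hx] using this
    have hyi : (v i).im = c * m i := by
      have := congrFun hc i; simpa [hy] using this
    apply Complex.ext
    · simp [hs, hmc, Complex.add_re, Complex.mul_re, hxi]
    · simp [hs, hmc, Complex.add_im, Complex.mul_im, hyi]
  obtain ⟨i, hvi⟩ := Function.ne_iff.mp hv0
  have hveq : s * mc i ≠ 0 := by
    rw [hvs] at hvi; simpa using hvi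
  have h6 : Ac.mulVec v = s • ((q : ℂ) • mc) := by
    rw [hvs, Matrix.mulVec_smul, hAcm]
  have h7 := congrFun (h6.symm.trans hv) i
  rw [hvs] at h7
  simp only [Pi.smul_apply, smul_eq_mul] at h7
  have h8 : ((q : ℂ) - μ) * (s * mc i) = 0 := by linear_combination h7
  rcases mul_eq_zero.mp h8 with h9 | h9
  · exact hμq (sub_eq_zero.mp h9).symm
  · exact hveq h9


theorem stmt_0 {V : Type*} [AddCommGroup V] [Module ℝ V] [FiniteDimensional ℝ V]
    [Nontrivial V] [TopologicalSpace V] [IsTopologicalAddGroup V] [ContinuousSMul ℝ V]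
    (B : V →ₗ[ℝ] V →ₗ[ℝ] ℝ) (hBsymm : ∀ x y, B x y = B y x)
    (hBsig : HasSignatureOneRest B)
    (C : Set V) (hCcone : IsConvexCone C) (hCclosed : IsClosed C)
    (hCsal : IsSalient C) (hCspan : Submodule.span ℝ C = ⊤)
    (hBC : ∀ x ∈ C, ∀ y ∈ C, 0 ≤ B x y)
    (q : ℝ) (hq : 0 < q)
    (T : V ≃ₗ[ℝ] V) (hTC : ⇑T '' C = C)
    (hTB : ∀ x y, B (T x) (T y) = q ^ 2 * B x y)
    (M : V) (hMC : M ∈ C) (hM0 : M ≠ 0) (hTM : T M = q • M) :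
    ∀ μ : ℂ, (Polynomial.aeval μ) (LinearMap.charpoly (T : V →ₗ[ℝ] V)) = 0 →
      ‖μ‖ = q := by
  obtain ⟨n, b, i₀, horth, hpos, hneg⟩ := hBsig
  exact aux_main B n b i₀ horth hpos hneg q hq T hTB M hM0 hTM (hBC M hMC M hMC)
end

section
/- Let V be a real vector space with 1 ≤ dim V ≤ 2, let C ⊆ V be a closed salient convex cone whose linear span equals V, and let T : V → V be a linear automorphism with T(C) = C such that every complex eigenvalue of T has modulus q, for some real q > 0. Then T ∘ T = q² · id_V. (This is the abstract content of Lemma 2.3(4) of the paper: if the Picard number is at most 2 and every eigenvalue of f* on N¹(X) has modulus q, then (f²)* = q²·id.) -/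
open Polynomial Complex Real


lemma key_arg (μ : ℂ) (hμ : μ.im ≠ 0) (h : ∀ n : ℕ, 1 ≤ n → 0 ≤ (μ^n).re) : False := by
  have hμ0 : μ ≠ 0 := fun h0 => hμ (by simp [h0])
  have habs : 0 < ‖μ‖ := norm_pos_iff.mpr hμ0
  have hre : ∀ n : ℕ, (μ^n).re = ‖μ‖^n * Real.cos (n * Complex.arg μ) := by
    intro n
    conv_lhs => rw [← Complex.norm_mul_exp_arg_mul_I μ]
    rw [mul_pow, ← Complex.exp_nat_mul]
    rw [show ((n : ℂ) * (Complex.arg μ * I)) = (((n * Complex.arg μ : ℝ) : ℂ) * I) by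
      push_cast; ring]
    rw [show ((‖μ‖ : ℂ))^n = ((‖μ‖ ^ n : ℝ) : ℂ) by push_cast; ring]
    rw [Complex.re_ofReal_mul, Complex.exp_ofReal_mul_I_re]
  set θ := |Complex.arg μ| with hθdef
  have hθpos : 0 < θ := abs_pos.mpr (fun h0 => hμ (Complex.arg_eq_zero_iff.mp h0).2)
  have hθlt : θ < π := by
    rcases abs_cases (Complex.arg μ) with ⟨he, _⟩ | ⟨he, _⟩
    · rcases lt_or_eq_of_le (Complex.arg_le_pi μ) with h' | h'
      · rw [hθdef, he]; exact h'
      · exact absurd (Complex.arg_eq_pi_iff.mp h').2 hμ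
    · have := Complex.neg_pi_lt_arg μ; linarith
  have hcos : ∀ n : ℕ, 1 ≤ n → 0 ≤ Real.cos (n * θ) := by
    intro n hn
    have := h n hn
    rw [hre n] at this
    have h2 : 0 ≤ Real.cos (n * Complex.arg μ) := by
      have hp : (0:ℝ) < ‖μ‖^n := pow_pos habs n
      nlinarith
    rcases abs_cases (Complex.arg μ) with ⟨he, _⟩ | ⟨he, _⟩
    · rwa [hθdef, he]
    · rw [hθdef, he, mul_neg, Real.cos_neg]; exact h2
  -- from n = 1 : θ ≤ π/2
  have hθle : θ ≤ π / 2 := by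
    by_contra hgt
    push_neg at hgt
    have := hcos 1 le_rfl
    rw [Nat.cast_one, one_mul] at this
    have := Real.cos_neg_of_pi_div_two_lt_of_lt hgt (by linarith [Real.pi_pos])
    linarith
  set n : ℕ := ⌊(π/2)/θ⌋₊ + 1 with hn
  have hn1 : (π/2)/θ < (n:ℝ) := by rw [hn]; push_cast; exact Nat.lt_floor_add_one _
  have hlow : π/2 < n * θ := by
    rw [div_lt_iff₀ hθpos] at hn1; linarith
  have hhigh : (n:ℝ) * θ ≤ π := by
    have h0 : (0:ℝ) ≤ (π/2)/θ := by positivity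
    have : (n:ℝ) ≤ (π/2)/θ + 1 := by
      rw [hn]; push_cast
      have := Nat.floor_le h0
      linarith
    calc (n:ℝ) * θ ≤ ((π/2)/θ + 1) * θ := by nlinarith
    _ = π/2 + θ := by field_simp
    _ ≤ π := by linarith
  have := Real.cos_neg_of_pi_div_two_lt_of_lt hlow (by linarith [Real.pi_pos])
  have := hcos n (by omega)
  linarith


/-- If T(Tv) = 2q Tv - q² v and T preserves a closed salient spanning cone, then T = q·id. -/
lemma nilp_case {V : Type*} [AddCommGroup V] [Module ℝ V]
    [TopologicalSpace V] [IsTopologicalAddGroup V] [ContinuousSMul ℝ V]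
    (C : Set V) (hCadd : ∀ x ∈ C, ∀ y ∈ C, x + y ∈ C)
    (hCsmul : ∀ (t : ℝ), 0 < t → ∀ x ∈ C, t • x ∈ C)
    (hCclosed : IsClosed C) (hCsal : ∀ x ∈ C, -x ∈ C → x = 0)
    (hCspan : Submodule.span ℝ C = ⊤)
    (T : V ≃ₗ[ℝ] V) (hTmem : ∀ v ∈ C, T v ∈ C) (hSmem : ∀ v ∈ C, T.symm v ∈ C)
    (q : ℝ) (hq : 0 < q)
    (hCay : ∀ v : V, T (T v) = (2*q) • T v - q^2 • v) :
    ∀ v : V, T v = q • v := by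
  set T' : V →ₗ[ℝ] V := (T : V →ₗ[ℝ] V) with hT'
  set S : V →ₗ[ℝ] V := (T.symm : V →ₗ[ℝ] V) with hS
  have hT'app : ∀ v, T' v = T v := fun v => rfl
  have hSapp : ∀ v, S v = T.symm v := fun v => rfl
  have claim1 : ∀ (n : ℕ) (v : V), (T'^n) v = q^n • v + (n * q^n / q) • (T v - q • v) := by
    intro n
    induction n with
    | zero => intro v; simp
    | succ n ih =>
      intro v
      have h1 : (T'^(n+1)) v = T' ((T'^n) v) := by
        rw [pow_succ', Module.End.mul_apply]
      rw [h1, ih v, map_add, map_smul, map_smul, map_sub, map_smul]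
      simp only [hT'app]
      rw [hCay v]
      match_scalars <;> field_simp <;> ring
  have claim2 : ∀ v : V, T.symm v = (2/q) • v - (1/q^2) • T v := by
    intro v
    apply T.injective
    rw [T.apply_symm_apply, map_sub, map_smul, map_smul, hCay v]
    match_scalars <;> field_simp <;> ring
  have claim3 : ∀ (n : ℕ) (v : V), (S^n) v = (1/q^n) • v - (n/(q^n * q)) • (T v - q • v) := by
    intro n
    induction n with
    | zero => intro v; simp
    | succ n ih =>
      intro v
      have h1 : (S^(n+1)) v = S ((S^n) v) := by
        rw [pow_succ', Module.End.mul_apply]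
      rw [h1, ih v, map_sub, map_smul, map_smul, map_sub, map_smul]
      simp only [hSapp]
      rw [T.symm_apply_apply, claim2 v]
      match_scalars <;> field_simp <;> ring
  have hTpow : ∀ (n : ℕ) (v : V), v ∈ C → (T'^n) v ∈ C := by
    intro n
    induction n with
    | zero => intro v hv; simpa using hv
    | succ n ih =>
      intro v hv
      rw [pow_succ, Module.End.mul_apply]
      exact ih _ (hTmem v hv)
  have hSpow : ∀ (n : ℕ) (v : V), v ∈ C → (S^n) v ∈ C := by
    intro n
    induction n with
    | zero => intro v hv; simpa using hv
    | succ n ih =>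
      intro v hv
      rw [pow_succ, Module.End.mul_apply]
      exact ih _ (hSmem v hv)
  have key : ∀ v ∈ C, T v = q • v := by
    intro v hv
    set w := T v - q • v with hw
    have hfC : ∀ n : ℕ, 1 ≤ n → (q/n) • v + w ∈ C := by
      intro n hn
      have hnpos : (0:ℝ) < n := by exact_mod_cast hn
      have hα : (0:ℝ) < q / (n * q^n) := by positivity
      have := hCsmul _ hα _ (hTpow n v hv)
      rw [claim1 n v] at this
      have heq : (q/n) • v + w =
          (q / (n * q^n)) • (q^n • v + (n * q^n / q) • (T v - q • v)) := by
        match_scalars <;> field_simp <;> ring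
      rw [heq]; exact this
    have hgC : ∀ n : ℕ, 1 ≤ n → (q/n) • v + (-w) ∈ C := by
      intro n hn
      have hnpos : (0:ℝ) < n := by exact_mod_cast hn
      have hβ : (0:ℝ) < q * q^n / n := by positivity
      have := hCsmul _ hβ _ (hSpow n v hv)
      rw [claim3 n v] at this
      have heq : (q/n) • v + (-w) =
          (q * q^n / n) • ((1/q^n) • v - (n/(q^n * q)) • (T v - q • v)) := by
        match_scalars <;> field_simp <;> ring
      rw [heq]; exact this
    have hlim : Filter.Tendsto (fun n : ℕ => (q/n) • v) Filter.atTop (nhds 0) := by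
      have h0 : Filter.Tendsto (fun n : ℕ => q/(n:ℝ)) Filter.atTop (nhds 0) :=
        tendsto_const_div_atTop_nhds_zero_nat q
      simpa using h0.smul_const v
    have hwC : w ∈ C := by
      have : Filter.Tendsto (fun n : ℕ => (q/n) • v + w) Filter.atTop (nhds w) := by
        simpa using hlim.add_const w
      exact hCclosed.mem_of_tendsto this
        (Filter.eventually_atTop.mpr ⟨1, fun n hn => hfC n hn⟩)
    have hwC' : -w ∈ C := by
      have : Filter.Tendsto (fun n : ℕ => (q/n) • v + (-w)) Filter.atTop (nhds (-w)) := by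
        simpa using hlim.add_const (-w)
      exact hCclosed.mem_of_tendsto this
        (Filter.eventually_atTop.mpr ⟨1, fun n hn => hgC n hn⟩)
    have : w = 0 := hCsal w hwC hwC'
    rw [hw, sub_eq_zero] at this
    exact this
  -- extend from C to all of V
  intro v
  have hE : Submodule.span ℝ C ≤ LinearMap.ker (T' - q • LinearMap.id) := by
    rw [Submodule.span_le]
    intro x hx
    simp only [SetLike.mem_coe, LinearMap.mem_ker, LinearMap.sub_apply, LinearMap.smul_apply,
      LinearMap.id_apply]
    rw [hT'app, key x hx, sub_self]
  rw [hCspan, top_le_iff] at hE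
  have := LinearMap.ext_iff.mp (LinearMap.ker_eq_top.mp hE) v
  simp only [LinearMap.sub_apply, LinearMap.smul_apply, LinearMap.id_apply,
    LinearMap.zero_apply, sub_eq_zero] at this
  rw [← hT'app, this]


lemma real_coeff_eq (μ : ℂ) (him : μ.im ≠ 0) {α β : ℝ} (h : (α:ℂ) * μ = (β:ℂ)) :
    α = 0 ∧ β = 0 := by
  have h1 := congrArg Complex.im h
  simp only [Complex.mul_im, Complex.ofReal_re, Complex.ofReal_im, mul_zero, add_zero,
    zero_mul, zero_add] at h1
  have hα : α = 0 := by
    rcases mul_eq_zero.mp h1 with h' | h'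
    · exact h'
    · exact absurd h' him
  refine ⟨hα, ?_⟩
  rw [hα] at h
  simpa using h.symm

lemma quad_eq (p : Polynomial ℝ) (hm : p.Monic) (hd : p.natDegree = 2) :
    p = X^2 + C (p.coeff 1) * X + C (p.coeff 0) := by
  ext n
  have h2 : p.coeff 2 = 1 := by
    have := hm.coeff_natDegree
    rwa [hd] at this
  rcases n with _ | _ | _ | n
  · simp
  · simp
  · simp [coeff_X_pow, h2]
  · have hz : p.coeff (n+3) = 0 := coeff_eq_zero_of_natDegree_lt (by omega)
    simp [coeff_X_pow, hz, coeff_C]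



theorem stmt_2 {V : Type*} [AddCommGroup V] [Module ℝ V] [FiniteDimensional ℝ V]
    [TopologicalSpace V] [IsTopologicalAddGroup V] [ContinuousSMul ℝ V]
    (hdim1 : 1 ≤ Module.finrank ℝ V) (hdim2 : Module.finrank ℝ V ≤ 2)
    (C : Set V) (hCcone : IsConvexCone C) (hCclosed : IsClosed C) (hCsal : IsSalient C)
    (hCspan : Submodule.span ℝ C = ⊤)
    (T : V ≃ₗ[ℝ] V) (hTC : ⇑T '' C = C)
    (q : ℝ) (hq : 0 < q)
    (hT : ∀ μ : ℂ, (Polynomial.aeval μ) (LinearMap.charpoly (T : V →ₗ[ℝ] V)) = 0 →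
      ‖μ‖ = q) :
    ∀ v : V, T (T v) = q ^ 2 • v := by
  obtain ⟨hCadd, hCsmul⟩ := hCcone
  have hCsal : ∀ x ∈ C, -x ∈ C → x = 0 := hCsal
  set T' : V →ₗ[ℝ] V := (T : V →ₗ[ℝ] V) with hT'def
  have hT'app : ∀ v, T' v = T v := fun _ => rfl
  have hTmem : ∀ v ∈ C, T v ∈ C := by
    intro v hv; rw [← hTC]; exact ⟨v, hv, rfl⟩
  have hSmem : ∀ v ∈ C, T.symm v ∈ C := by
    intro v hv
    rw [← hTC] at hv
    obtain ⟨u, hu, rfl⟩ := hv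
    simpa using hu
  have hscale : ∀ x ∈ C, x ≠ 0 → ∀ r : ℝ, r • x ∈ C → 0 ≤ r := by
    intro x hx hx0 r hr
    by_contra hneg
    push_neg at hneg
    have h1 : (-r) • x ∈ C := hCsmul (-r) (by linarith) x hx
    rw [neg_smul] at h1
    rcases smul_eq_zero.mp (hCsal _ hr h1) with h | h
    · exact absurd h (ne_of_lt hneg)
    · exact hx0 h
  have hex : ∃ v ∈ C, v ≠ 0 := by
    by_contra h
    push_neg at h
    have hle : Submodule.span ℝ C ≤ ⊥ :=
      Submodule.span_le.mpr fun x hx => by simp [h x hx]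
    rw [hCspan] at hle
    have hsub : Subsingleton V := subsingleton_iff_forall_eq 0 |>.mpr
      fun y => by simpa using hle (Submodule.mem_top (x := y))
    have := Module.finrank_zero_of_subsingleton (R := ℝ) (M := V)
    omega
  have hTpow : ∀ (n : ℕ), ∀ v ∈ C, (T'^n) v ∈ C := by
    intro n
    induction n with
    | zero => intro v hv; simpa using hv
    | succ n ih =>
      intro v hv
      rw [pow_succ, Module.End.mul_apply]
      exact ih _ (by rw [hT'app]; exact hTmem v hv)
  have hpow0 : ∀ (n : ℕ) (v : V), v ≠ 0 → (T'^n) v ≠ 0 := by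
    intro n
    induction n with
    | zero => intro v hv; simpa using hv
    | succ n ih =>
      intro v hv
      rw [pow_succ, Module.End.mul_apply]
      apply ih
      rw [hT'app]
      exact fun h => hv (T.map_eq_zero_iff.mp h)
  have hmonic : T'.charpoly.Monic := LinearMap.charpoly_monic T'
  have hdeg : T'.charpoly.natDegree = Module.finrank ℝ V := T'.charpoly_natDegree
  have hCH := LinearMap.aeval_self_charpoly T'
  rcases (by omega : Module.finrank ℝ V = 1 ∨ Module.finrank ℝ V = 2) with hrk | hrk
  · -- dimension 1
    have hdeg1 : T'.charpoly.natDegree = 1 := by rw [hdeg, hrk]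
    have hp := hmonic.eq_X_add_C hdeg1
    set c := T'.charpoly.coeff 0 with hc
    have hroot : (aeval ((-c : ℝ) : ℂ)) T'.charpoly = 0 := by
      rw [hp]; simp
    have habs := hT _ hroot
    rw [Complex.norm_real, Real.norm_eq_abs] at habs
    have hc2 : c^2 = q^2 := by
      have h1 : |(-c)| = q := habs
      nlinarith [_root_.sq_abs (-c)]
    have hTv : ∀ v : V, T v = (-c) • v := by
      intro v
      have h0 := LinearMap.congr_fun hCH v
      rw [hp] at h0
      simp only [map_add, aeval_X, aeval_C, LinearMap.add_apply,
        Module.algebraMap_end_apply, LinearMap.zero_apply, hT'app] at h0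
      have : T v = (T v + c • v) - c • v := by abel
      rw [this, h0, neg_smul]
      abel
    intro v
    rw [hTv v, map_smul, hTv v, smul_smul, ← hc2]
    congr 1
    ring
  · -- dimension 2
    have hdeg2 : T'.charpoly.natDegree = 2 := by rw [hdeg, hrk]
    have hp := quad_eq _ hmonic hdeg2
    set b := T'.charpoly.coeff 1 with hbdef
    set d := T'.charpoly.coeff 0 with hddef
    have hCay : ∀ v : V, T (T v) = (-b) • T v - d • v := by
      intro v
      have h0 := LinearMap.congr_fun hCH v
      rw [hp] at h0
      simp only [map_add, map_mul, map_pow, aeval_X, aeval_C, LinearMap.add_apply,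
        Module.End.mul_apply, Module.algebraMap_end_apply, pow_two,
        LinearMap.zero_apply, hT'app] at h0
      have h1 : T (T v) = (T (T v) + b • T v + d • v) - b • T v - d • v := by abel
      rw [h1, h0, neg_smul]
      abel
    have hev : ∀ z : ℂ, (aeval z) T'.charpoly = z^2 + b*z + d := by
      intro z
      rw [hp]
      simp only [map_add, map_mul, map_pow, aeval_X, aeval_C, Complex.coe_algebraMap]
    clear_value b d
    obtain ⟨s, hs⟩ : ∃ s : ℂ, s^2 = (b:ℂ)^2 - 4*d :=
      IsAlgClosed.exists_pow_nat_eq _ (by norm_num)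
    set μ : ℂ := (-(b:ℂ) + s)/2 with hμdef
    have hμroot : μ^2 + b*μ + d = 0 := by
      rw [hμdef]
      linear_combination (1/4 : ℂ) * hs
    have habsμ : ‖μ‖ = q := hT μ (by rw [hev]; exact hμroot)
    have hroot2 : (-(b:ℂ) - μ)^2 + b*(-(b:ℂ)-μ) + d = 0 := by linear_combination hμroot
    have habsμ2 : ‖(-(b:ℂ) - μ)‖ = q := hT _ (by rw [hev]; exact hroot2)
    have hprod : μ * (-(b:ℂ) - μ) = d := by linear_combination -hμroot
    clear hμdef hs
    clear_value μ
    by_cases him : μ.im = 0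
    · -- both roots real
      have hμeq : ((μ.re : ℝ) : ℂ) = μ := by
        apply Complex.ext <;> simp [him]
      set a₁ := μ.re with ha₁
      set a₂ := -b - a₁ with ha₂
      have hμ2eq : ((a₂ : ℝ) : ℂ) = -(b:ℂ) - μ := by
        rw [← hμeq, ha₂]; push_cast; ring
      have h1 : |a₁| = q := by rw [← habsμ, ← hμeq, Complex.norm_real, Real.norm_eq_abs]
      have h2 : |a₂| = q := by rw [← habsμ2, ← hμ2eq, Complex.norm_real, Real.norm_eq_abs]
      have hd : d = a₁ * a₂ := by
        have h3 : ((a₁*a₂ : ℝ) : ℂ) = (d:ℂ) := by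
          push_cast
          rw [hμeq, hμ2eq]  -- careful: ↑a₁ * ↑a₂ with hμeq : ↑a₁ = μ? a₁ = μ.re so ↑a₁ = ↑μ.re
          exact hprod
        exact_mod_cast h3.symm
      have hb : b = -(a₁ + a₂) := by rw [ha₂]; ring
      have habs1 := abs_eq (le_of_lt hq) |>.mp h1
      have habs2 := abs_eq (le_of_lt hq) |>.mp h2
      rcases habs1 with e1 | e1 <;> rcases habs2 with e2 | e2
      · -- a₁ = q, a₂ = q : nilpotent case
        have hq2 : ∀ v : V, T (T v) = (2*q) • T v - q^2 • v := by
          intro v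
          rw [hCay v, hb, hd, e1, e2]
          match_scalars <;> try ring
        have hfix := nilp_case C hCadd hCsmul hCclosed hCsal hCspan T hTmem hSmem q hq hq2
        intro v
        rw [hfix v, map_smul, hfix v, smul_smul, pow_two]
      · -- a₁ = q, a₂ = -q
        intro v
        rw [hCay v, hb, hd, e1, e2]
        match_scalars <;> try ring
      · -- a₁ = -q, a₂ = q
        intro v
        rw [hCay v, hb, hd, e1, e2]
        match_scalars <;> try ring
      · -- a₁ = -q, a₂ = -q : contradiction
        exfalso
        obtain ⟨v, hvC, hv0⟩ := hex
        have hT2 : T (T v) + q^2 • v = (-(2*q)) • T v := by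
          rw [hCay v, hb, hd, e1, e2]
          match_scalars <;> try ring
        have hmemL : T (T v) + q^2 • v ∈ C :=
          hCadd _ (hTmem _ (hTmem _ hvC)) _ (hCsmul _ (by positivity) _ hvC)
        rw [hT2] at hmemL
        have hTv0 : T v ≠ 0 := fun h => hv0 (T.map_eq_zero_iff.mp h)
        have := hscale _ (hTmem _ hvC) hTv0 _ hmemL
        linarith
    · -- complex conjugate roots : contradiction
      exfalso
      have hconj : (starRingEnd ℂ) μ ^2 + (b:ℂ) * (starRingEnd ℂ) μ + (d:ℂ) = 0 := by
        have h0 := congrArg (starRingEnd ℂ) hμroot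
        simpa [map_add, map_mul, map_pow, Complex.conj_ofReal] using h0
      have hconjμ : (starRingEnd ℂ) μ = -(b:ℂ) - μ := by
        have hfac : ((starRingEnd ℂ) μ - μ) * ((starRingEnd ℂ) μ + μ + b) = 0 := by
          linear_combination hconj - hμroot
        rcases mul_eq_zero.mp hfac with h | h
        · exact absurd (Complex.conj_eq_iff_im.mp (sub_eq_zero.mp h)) him
        · linear_combination h
      have hd : d = q^2 := by
        have h1 : (d:ℂ) = ((‖μ‖ ^ 2 : ℝ) : ℂ) := by
          rw [← hprod, ← hconjμ, Complex.mul_conj, Complex.normSq_eq_norm_sq]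
        rw [habsμ] at h1
        exact_mod_cast h1
      have hbre : b = -(2 * μ.re) := by
        have h1 : (b:ℂ) = -(μ + (starRingEnd ℂ) μ) := by rw [hconjμ]; ring
        rw [Complex.add_conj] at h1
        exact_mod_cast h1
      have hCayt : ∀ v : V, T (T v) = (2*μ.re) • T v - q^2 • v := by
        intro v
        rw [hCay v, hbre, hd]
        match_scalars <;> try ring
      have hμsq : μ^2 = 2*μ.re * μ - q^2 := by
        have h0 : μ^2 + ((-(2*μ.re) : ℝ):ℂ)*μ + ((q^2 : ℝ):ℂ) = 0 := by
          rw [← hbre, ← hd]; exact hμroot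
        push_cast at h0
        linear_combination h0
      have hpowind : ∀ n : ℕ, ∃ c e : ℝ, μ^(n+1) = c * μ + e ∧
          ∀ v : V, (T'^(n+1)) v = c • T v + e • v := by
        intro n
        induction n with
        | zero =>
          refine ⟨1, 0, by push_cast; ring, fun v => ?_⟩
          rw [pow_one, hT'app]
          simp
        | succ n ih =>
          obtain ⟨c, e, hμn, hTn⟩ := ih
          refine ⟨c * (2*μ.re) + e, -(c * q^2), ?_, fun v => ?_⟩
          · have h3 : μ^(n+1+1) = (c*μ + e) * μ := by rw [← hμn]; ring
            rw [h3]
            push_cast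
            linear_combination (c:ℂ) * hμsq
          · have h4 : (T'^(n+1+1)) v = T' ((T'^(n+1)) v) := by
              rw [pow_succ', Module.End.mul_apply]
            rw [h4, hTn v, map_add, map_smul, map_smul]
            simp only [hT'app]
            rw [hCayt (v := v)]
            match_scalars <;> try ring
      have hRe : ∀ n : ℕ, 1 ≤ n → 0 ≤ (μ^n).re := by
        intro n hn
        obtain ⟨m, rfl⟩ : ∃ m, n = m + 1 := ⟨n - 1, by omega⟩
        obtain ⟨c, e, hμn, hTn⟩ := hpowind m
        obtain ⟨c2, e2, hμ2, hT2⟩ := hpowind (2*m + 1)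
        set R := (μ^(m+1)).re with hR
        have hcc : μ^(m+1) * (starRingEnd ℂ) (μ^(m+1)) = ((q^(2*m+2):ℝ):ℂ) := by
          rw [Complex.mul_conj, Complex.normSq_eq_norm_sq, norm_pow, habsμ]
          push_cast; ring
        have hac : μ^(m+1) + (starRingEnd ℂ) (μ^(m+1)) = ((2*R:ℝ):ℂ) := by
          rw [Complex.add_conj, hR]
        have hid : μ^(2*m+1+1) + ((q^(2*m+2) : ℝ) : ℂ) = ((2*R : ℝ):ℂ) * μ^(m+1) := by
          linear_combination μ^(m+1) * hac - hcc
        rw [hμ2, hμn] at hid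
        have hαβ : c2 - 2*R*c = 0 ∧ 2*R*e - e2 - q^(2*m+2) = 0 := by
          apply real_coeff_eq μ him
          push_cast at hid ⊢
          linear_combination hid
        obtain ⟨v, hvC, hv0⟩ := hex
        have hvec : (T'^(2*m+1+1)) v + q^(2*m+2) • v = (2*R) • ((T'^(m+1)) v) := by
          rw [hT2 v, hTn v]
          match_scalars
          · linarith [hαβ.1]
          · linarith [hαβ.2]
        have hmemL : (T'^(2*m+1+1)) v + q^(2*m+2) • v ∈ C :=
          hCadd _ (hTpow _ _ hvC) _ (hCsmul _ (by positivity) _ hvC)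
        rw [hvec] at hmemL
        have h6 := hscale _ (hTpow _ _ hvC) (hpow0 _ _ hv0) _ hmemL
        rw [hR]
        linarith
      exact key_arg μ him hRe
end

section
/- Let V be a real vector space of finite dimension n ≥ 3, C ⊆ V a salient convex cone, φ₁, …, φ_{n−1} linearly independent linear functionals on V, and A₂, …, A_{n−1} finite subsets of ℝ. Then the number of distinct extremal rays R of C such that φ₁(x) > 0 for every nonzero x ∈ R and such that for each j ∈ {2, …, n−1} there exists a_j ∈ A_j with φ_j(x) = a_j · φ₁(x) for all x ∈ R, is at most 2 · ∏_{j=2}^{n−1} |A_j|. (This is the combinatorial core of the proof of Theorem 1 of the appendix: infinitely many pairwise distinct extremal rays cannot all satisfy ratio conditions with only finitely many possible ratio values, since each tuple of ratios confines the rays to a two-dimensional subspace containing at most two extremal rays.) -/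
/-- An extremal ray of a convex cone `C`. -/
def IsExtremalRay {V : Type*} [AddCommGroup V] [Module ℝ V] (C R : Set V) : Prop :=
  (∃ v, v ∈ C ∧ v ≠ 0 ∧ R = {x | ∃ t : ℝ, 0 ≤ t ∧ x = t • v}) ∧
  R ⊆ C ∧ ∀ x ∈ C, ∀ y ∈ C, x + y ∈ R → x ∈ R ∧ y ∈ R


lemma aux_pi_surj {V : Type*} [AddCommGroup V] [Module ℝ V] {ι : Type*} [Fintype ι] [DecidableEq ι]
    {f : ι → V →ₗ[ℝ] ℝ} (h : LinearIndependent ℝ f) :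
    Function.Surjective (LinearMap.pi f) := by
  rw [← LinearMap.range_eq_top]
  by_contra hne
  obtain ⟨g, hg0, hg⟩ := Submodule.exists_dual_map_eq_bot_of_lt_top
    (p := LinearMap.range (LinearMap.pi f)) (lt_top_iff_ne_top.2 hne) inferInstance
  have hgv : ∀ v : V, g (LinearMap.pi f v) = 0 := by
    intro v
    have : g (LinearMap.pi f v) ∈ Submodule.map g (LinearMap.range (LinearMap.pi f)) :=
      Submodule.mem_map_of_mem (LinearMap.mem_range_self _ v)
    rw [hg] at this
    exact (Submodule.mem_bot ℝ).1 this
  have hgx : ∀ x : ι → ℝ, g x = ∑ i, x i * g (Pi.single i 1) := by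
    intro x
    conv_lhs => rw [← Finset.univ_sum_single x, map_sum]
    refine Finset.sum_congr rfl fun i _ => ?_
    rw [show (Pi.single i (x i) : ι → ℝ) = x i • (Pi.single i 1 : ι → ℝ) by
      rw [← Pi.single_smul, smul_eq_mul, mul_one], map_smul, smul_eq_mul]
  have key : ∀ i, g (Pi.single i 1) = 0 := by
    refine Fintype.linearIndependent_iff.1 h (fun i => g (Pi.single i 1)) ?_
    ext v
    have := (hgx (LinearMap.pi f v)).symm.trans (hgv v)
    simpa [mul_comm] using this
  apply hg0
  refine LinearMap.ext fun x => ?_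
  rw [hgx x]
  simp [key]

lemma aux_ray_eq_ray {V : Type*} [AddCommGroup V] [Module ℝ V] {v w : V} {c : ℝ}
    (hc : 0 < c) (h : v = c • w) :
    {x : V | ∃ t : ℝ, 0 ≤ t ∧ x = t • v} = {x : V | ∃ t : ℝ, 0 ≤ t ∧ x = t • w} := by
  ext y
  constructor
  · rintro ⟨t, ht, rfl⟩
    exact ⟨t * c, by positivity, by rw [h, smul_smul]⟩
  · rintro ⟨t, ht, rfl⟩
    refine ⟨t / c, by positivity, ?_⟩
    rw [h, smul_smul, div_mul_cancel₀ t hc.ne']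

lemma aux_ray_eq_of_mem {V : Type*} [AddCommGroup V] [Module ℝ V] {v w x : V}
    (hx : x ≠ 0)
    (h1 : x ∈ {y : V | ∃ t : ℝ, 0 ≤ t ∧ y = t • v})
    (h2 : x ∈ {y : V | ∃ t : ℝ, 0 ≤ t ∧ y = t • w}) :
    {y : V | ∃ t : ℝ, 0 ≤ t ∧ y = t • v} = {y : V | ∃ t : ℝ, 0 ≤ t ∧ y = t • w} := by
  obtain ⟨t, ht, htx⟩ := h1
  obtain ⟨s, hs, hsx⟩ := h2
  have ht0 : 0 < t := ht.lt_of_ne (by rintro rfl; exact hx (by simpa using htx))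
  have hs0 : 0 < s := hs.lt_of_ne (by rintro rfl; exact hx (by simpa using hsx))
  have hv : v = (s / t) • w := by
    have : t • v = s • w := htx ▸ hsx
    have h' : v = t⁻¹ • (s • w) := by rw [← this, smul_smul, inv_mul_cancel₀ ht0.ne', one_smul]
    rw [h', smul_smul, div_eq_inv_mul]
  exact aux_ray_eq_ray (by positivity) hv

lemma aux_middle {V : Type*} [AddCommGroup V] [Module ℝ V] {C : Set V}
    (hCcone : IsConvexCone C) (q d : V) (R : Fin 3 → Set V) (r : Fin 3 → ℝ)
    (hR : ∀ i, IsExtremalRay C (R i))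
    (hgen : ∀ i, R i = {x : V | ∃ t : ℝ, 0 ≤ t ∧ x = t • (q + r i • d)})
    (hne0 : ∀ i, q + r i • d ≠ 0)
    (i j k : Fin 3) (h1 : r i < r j) (h2 : r j < r k) : R i = R j := by
  set l : ℝ := (r k - r j) / (r k - r i) with hl
  have hik : r i < r k := h1.trans h2
  have hl0 : 0 < l := by apply div_pos <;> linarith
  have hl1 : l < 1 := by rw [div_lt_one (by linarith)]; linarith
  have hmul : l * (r k - r i) = r k - r j := div_mul_cancel₀ _ (by intro h; nlinarith [h])
  have hcomb : l * r i + (1 - l) * r k = r j := by nlinarith [hmul]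
  have key : (l • (q + r i • d)) + ((1 - l) • (q + r k • d)) = q + r j • d := by
    have : (l • (q + r i • d)) + ((1 - l) • (q + r k • d))
        = (l + (1 - l)) • q + (l * r i + (1 - l) * r k) • d := by module
    rw [this, hcomb]
    norm_num
  have hiC : q + r i • d ∈ C := (hR i).2.1 (by rw [hgen i]; exact ⟨1, zero_le_one, (one_smul ℝ _).symm⟩)
  have hkC : q + r k • d ∈ C := (hR k).2.1 (by rw [hgen k]; exact ⟨1, zero_le_one, (one_smul ℝ _).symm⟩)
  have hxC : l • (q + r i • d) ∈ C := hCcone.2 l hl0 _ hiC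
  have hyC : (1 - l) • (q + r k • d) ∈ C := hCcone.2 (1 - l) (by linarith) _ hkC
  have hsum : (l • (q + r i • d)) + ((1 - l) • (q + r k • d)) ∈ R j := by
    rw [key, hgen j]; exact ⟨1, zero_le_one, (one_smul ℝ _).symm⟩
  have hmemj : l • (q + r i • d) ∈ R j := ((hR j).2.2 _ hxC _ hyC hsum).1
  have hmemi : l • (q + r i • d) ∈ R i := by
    rw [hgen i]; exact ⟨l, hl0.le, rfl⟩
  have hxne : l • (q + r i • d) ≠ 0 := smul_ne_zero hl0.ne' (hne0 i)
  rw [hgen i, hgen j]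
  exact aux_ray_eq_of_mem hxne (by rw [← hgen i]; exact hmemi) (by rw [← hgen j]; exact hmemj)

lemma aux_exists_middle (r : Fin 3 → ℝ) (h : ∀ i j : Fin 3, i ≠ j → r i ≠ r j) :
    ∃ i j k : Fin 3, r i < r j ∧ r j < r k := by
  have h01 := h 0 1 (by decide)
  have h02 := h 0 2 (by decide)
  have h12 := h 1 2 (by decide)
  rcases h01.lt_or_gt with a | a <;> rcases h02.lt_or_gt with b | b <;>
    rcases h12.lt_or_gt with c | c
  · exact ⟨0, 1, 2, a, c⟩
  · exact ⟨0, 2, 1, b, c⟩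
  · exact absurd (a.trans c) (by intro h'; linarith)
  · exact ⟨2, 0, 1, b, a⟩
  · exact ⟨1, 0, 2, a, b⟩
  · exact absurd (c.trans a) (by intro h'; linarith)
  · exact ⟨1, 2, 0, c, b⟩
  · exact ⟨2, 1, 0, c, a⟩

lemma aux_fiber {V : Type*} [AddCommGroup V] [Module ℝ V] [FiniteDimensional ℝ V]
    (n : ℕ) (hn : 3 ≤ n) (hdim : Module.finrank ℝ V = n)
    {C : Set V} (hCcone : IsConvexCone C)
    (φ₁ : V →ₗ[ℝ] ℝ) (φ : Fin (n - 2) → V →ₗ[ℝ] ℝ)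
    (hindep : LinearIndependent ℝ (fun o : Option (Fin (n - 2)) => o.elim φ₁ φ))
    (a : Fin (n - 2) → ℝ) (R : Fin 3 → Set V)
    (hcond : ∀ i, IsExtremalRay C (R i) ∧ (∀ x ∈ R i, x ≠ 0 → 0 < φ₁ x) ∧
      ∀ j : Fin (n - 2), ∀ x ∈ R i, φ j x = a j * φ₁ x)
    (hinj : ∀ i j, i ≠ j → R i ≠ R j) : False := by
  classical
  set L : V →ₗ[ℝ] (Option (Fin (n - 2)) → ℝ) :=
    LinearMap.pi (fun o : Option (Fin (n - 2)) => o.elim φ₁ φ) with hL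
  have hsurj : Function.Surjective L := aux_pi_surj hindep
  have hrank : Module.finrank ℝ (LinearMap.range L) + Module.finrank ℝ (LinearMap.ker L) = n := by
    rw [L.finrank_range_add_finrank_ker]; exact hdim
  have hrtop : LinearMap.range L = ⊤ := LinearMap.range_eq_top.2 hsurj
  have hrfr : Module.finrank ℝ (LinearMap.range L) = n - 1 := by
    rw [hrtop, finrank_top, Module.finrank_pi]
    simp only [Fintype.card_option, Fintype.card_fin]
    omega
  have hker1 : Module.finrank ℝ (LinearMap.ker L) = 1 := by omega
  obtain ⟨d, hd0, hdspan⟩ := finrank_eq_one_iff'.1 hker1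
  -- generators
  have hgen : ∀ i, ∃ v, v ∈ C ∧ v ≠ 0 ∧ R i = {x : V | ∃ t : ℝ, 0 ≤ t ∧ x = t • v} :=
    fun i => (hcond i).1.1
  choose v hvC hv0 hvR using hgen
  have hvmem : ∀ i, v i ∈ R i := fun i => by
    rw [hvR i]; exact ⟨1, zero_le_one, (one_smul ℝ _).symm⟩
  have hφ₁v : ∀ i, 0 < φ₁ (v i) := fun i => (hcond i).2.1 _ (hvmem i) (hv0 i)
  set p : Fin 3 → V := fun i => (φ₁ (v i))⁻¹ • v i with hp
  have hpR : ∀ i, R i = {x : V | ∃ t : ℝ, 0 ≤ t ∧ x = t • p i} := fun i => by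
    rw [hvR i]
    exact aux_ray_eq_ray (hφ₁v i) (by
      rw [hp, smul_smul, mul_inv_cancel₀ (hφ₁v i).ne', one_smul])
  have hpmem : ∀ i, p i ∈ R i := fun i => by
    rw [hpR i]; exact ⟨1, zero_le_one, (one_smul ℝ _).symm⟩
  have hφ₁p : ∀ i, φ₁ (p i) = 1 := fun i => by
    simp [hp, map_smul, inv_mul_cancel₀ (hφ₁v i).ne']
  have hφp : ∀ i (j : Fin (n - 2)), φ j (p i) = a j := fun i j => by
    rw [(hcond i).2.2 j _ (hpmem i), hφ₁p, mul_one]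
  have hp0 : ∀ i, p i ≠ 0 := fun i h => by simpa [h, map_zero] using hφ₁p i
  have hker : ∀ i, p i - p 0 ∈ LinearMap.ker L := by
    intro i
    rw [LinearMap.mem_ker]
    funext o
    rcases o with _ | j
    · simp [hL, LinearMap.pi_apply, map_sub, hφ₁p]
    · simp [hL, LinearMap.pi_apply, map_sub, hφp]
  have hc : ∀ i, ∃ c : ℝ, c • (d : V) = p i - p 0 := by
    intro i
    obtain ⟨c, hcc⟩ := hdspan ⟨p i - p 0, hker i⟩
    exact ⟨c, by simpa using congrArg (Subtype.val) hcc⟩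
  choose c hcc using hc
  have hpeq : ∀ i, p i = p 0 + c i • (d : V) := fun i => by rw [hcc i]; abel
  have hcne : ∀ i j, i ≠ j → c i ≠ c j := by
    intro i j hij hceq
    have hpij : p i = p j := by rw [hpeq i, hpeq j, hceq]
    refine hinj i j hij ?_
    rw [hpR i, hpR j]
    exact aux_ray_eq_of_mem (hp0 i) (by rw [← hpR i]; exact hpmem i)
      (by rw [hpij, ← hpR j]; exact hpmem j)
  obtain ⟨i, j, k, h1, h2⟩ := aux_exists_middle c hcne
  have hij : i ≠ j := fun h => absurd (congrArg c h) h1.ne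
  refine hinj i j hij ?_
  refine aux_middle hCcone (p 0) (d : V) R c (fun i => (hcond i).1)
    (fun i => by rw [hpR i, ← hpeq i]) (fun i => by rw [← hpeq i]; exact hp0 i) i j k h1 h2

lemma aux_three {V : Type*} [AddCommGroup V] [Module ℝ V] [FiniteDimensional ℝ V]
    (n : ℕ) (hn : 3 ≤ n) (hdim : Module.finrank ℝ V = n)
    {C : Set V} (hCcone : IsConvexCone C)
    (φ₁ : V →ₗ[ℝ] ℝ) (φ : Fin (n - 2) → V →ₗ[ℝ] ℝ)
    (hindep : LinearIndependent ℝ (fun o : Option (Fin (n - 2)) => o.elim φ₁ φ))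
    (a : Fin (n - 2) → ℝ) (R₁ R₂ R₃ : Set V)
    (h₁ : IsExtremalRay C R₁ ∧ (∀ x ∈ R₁, x ≠ 0 → 0 < φ₁ x) ∧
      ∀ j : Fin (n - 2), ∀ x ∈ R₁, φ j x = a j * φ₁ x)
    (h₂ : IsExtremalRay C R₂ ∧ (∀ x ∈ R₂, x ≠ 0 → 0 < φ₁ x) ∧
      ∀ j : Fin (n - 2), ∀ x ∈ R₂, φ j x = a j * φ₁ x)
    (h₃ : IsExtremalRay C R₃ ∧ (∀ x ∈ R₃, x ≠ 0 → 0 < φ₁ x) ∧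
      ∀ j : Fin (n - 2), ∀ x ∈ R₃, φ j x = a j * φ₁ x)
    (h12 : R₁ ≠ R₂) (h13 : R₁ ≠ R₃) (h23 : R₂ ≠ R₃) : False := by
  refine aux_fiber n hn hdim hCcone φ₁ φ hindep a ![R₁, R₂, R₃] ?_ ?_
  · intro i; fin_cases i
    · exact h₁
    · exact h₂
    · exact h₃
  · intro i j hij
    fin_cases i <;> fin_cases j <;>
      simp_all [h12, h13, h23, h12.symm, h13.symm, h23.symm]

/-- The `n − 1` linearly independent functionals are indexed by `φ₁` together with
`φ j` for `j` ranging over `Fin (n − 2)` (playing the role of the indices `2, …, n−1`). -/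
theorem stmt_8 {V : Type*} [AddCommGroup V] [Module ℝ V] [FiniteDimensional ℝ V]
    (n : ℕ) (hn : 3 ≤ n) (hdim : Module.finrank ℝ V = n)
    (C : Set V) (hCcone : IsConvexCone C) (hCsal : IsSalient C)
    (φ₁ : V →ₗ[ℝ] ℝ) (φ : Fin (n - 2) → V →ₗ[ℝ] ℝ)
    (hindep : LinearIndependent ℝ (fun o : Option (Fin (n - 2)) => o.elim φ₁ φ))
    (A : Fin (n - 2) → Finset ℝ) :
    {R : Set V | IsExtremalRay C R ∧ (∀ x ∈ R, x ≠ 0 → 0 < φ₁ x) ∧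
        ∀ j : Fin (n - 2), ∃ a ∈ A j, ∀ x ∈ R, φ j x = a * φ₁ x}.Finite ∧
      {R : Set V | IsExtremalRay C R ∧ (∀ x ∈ R, x ≠ 0 → 0 < φ₁ x) ∧
        ∀ j : Fin (n - 2), ∃ a ∈ A j, ∀ x ∈ R, φ j x = a * φ₁ x}.ncard ≤
        2 * ∏ j : Fin (n - 2), (A j).card := by
  classical
  set S : Set (Set V) := {R : Set V | IsExtremalRay C R ∧ (∀ x ∈ R, x ≠ 0 → 0 < φ₁ x) ∧
      ∀ j : Fin (n - 2), ∃ a ∈ A j, ∀ x ∈ R, φ j x = a * φ₁ x} with hS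
  have hF : ∀ a : Fin (n - 2) → ℝ, ∃ F : Finset (Set V), F.card ≤ 2 ∧
      {R : Set V | IsExtremalRay C R ∧ (∀ x ∈ R, x ≠ 0 → 0 < φ₁ x) ∧
        ∀ j : Fin (n - 2), ∀ x ∈ R, φ j x = a j * φ₁ x} ⊆ ↑F := by
    intro a
    set Sa : Set (Set V) := {R : Set V | IsExtremalRay C R ∧ (∀ x ∈ R, x ≠ 0 → 0 < φ₁ x) ∧
        ∀ j : Fin (n - 2), ∀ x ∈ R, φ j x = a j * φ₁ x} with hSa
    by_cases hemp : Sa = ∅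
    · exact ⟨∅, by simp, by rw [hemp]; simp⟩
    obtain ⟨R₁, hR₁⟩ := Set.nonempty_iff_ne_empty.2 hemp
    by_cases hone : ∀ R ∈ Sa, R = R₁
    · exact ⟨{R₁}, by simp, fun R hR => by simp [hone R hR]⟩
    push_neg at hone
    obtain ⟨R₂, hR₂, hR₂ne⟩ := hone
    refine ⟨{R₁, R₂}, Finset.card_le_two, ?_⟩
    intro R hR
    simp only [Finset.coe_insert, Finset.coe_singleton, Set.mem_insert_iff,
      Set.mem_singleton_iff]
    by_contra hcon
    push_neg at hcon
    exact aux_three n hn hdim hCcone φ₁ φ hindep a R R₁ R₂ hR hR₁ hR₂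
      hcon.1 hcon.2 (Ne.symm hR₂ne)
  choose F hFcard hFsub using hF
  set T : Finset (Fin (n - 2) → ℝ) := Fintype.piFinset A with hT
  have hsub : S ⊆ ↑(T.biUnion F) := by
    intro R hR
    obtain ⟨hext, hpos, hratio⟩ := hR
    choose a ha hra using hratio
    rw [Finset.coe_biUnion]
    exact Set.mem_biUnion (Fintype.mem_piFinset.2 ha)
      (hFsub a ⟨hext, hpos, fun j x hx => hra j x hx⟩)
  have hfin : S.Finite := Set.Finite.subset (T.biUnion F).finite_toSet hsub
  refine ⟨hfin, ?_⟩
  calc S.ncard ≤ (↑(T.biUnion F) : Set (Set V)).ncard :=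
        Set.ncard_le_ncard hsub (T.biUnion F).finite_toSet
    _ = (T.biUnion F).card := Set.ncard_coe_finset _
    _ ≤ ∑ a ∈ T, (F a).card := Finset.card_biUnion_le
    _ ≤ ∑ _a ∈ T, 2 := Finset.sum_le_sum fun a _ => hFcard a
    _ = T.card * 2 := by rw [Finset.sum_const, smul_eq_mul]
    _ = 2 * ∏ j : Fin (n - 2), (A j).card := by
        rw [hT, Fintype.card_piFinset, mul_comm]
end
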